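/- Let P be a string of length m and k ∈ [1,m]. Then at least one of the following holds: (a) P contains 2k disjoint fragments B_1,…,B_{2k}, each of length ⌊m/(8k)⌋ and smallest period greater than m/(128k); (b) P contains disjoint fragments R_1,…,R_r of total length at least 3m/8, where each R_i has length ≥ m/(8k) and admits a primitive string Q_i with |Q_i| ≤ m/(128k) and δ_H(R_i, Q_i*) = ⌈8k·|R_i|/m⌉; (c) there is a primitive string Q with |Q| ≤ m/(128k) and δ_H(P, Q*) < 8k. -/

import Mathlib

open List

variable {α : Type*}

/-- The fragment S[i..j) of a string (list) S. -/
def frag (S : List α) (i j : ℕ) : List α := (S.drop i).take (j - i)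

/-- Q^∞[a..b): the fragment of the infinite repetition of Q from a (incl.) to b (excl.). -/
def repPrefix [Inhabited α] (Q : List α) (a b : ℕ) : List α :=
  (List.range' a (b - a)).map (fun i => Q.getD (i % Q.length) default)

/-- Hamming distance of two strings of the same length (counted over positions of S). -/
def hamming [DecidableEq α] [Inhabited α] (S T : List α) : ℕ :=
  ((Finset.range S.length).filter
    (fun i => S.getD i default ≠ T.getD i default)).card

/-- δ_H(S, Q*): Hamming distance of S to the length-|S| prefix of Q^∞. -/
def hammingStar [DecidableEq α] [Inhabited α] (S Q : List α) : ℕ :=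
  hamming S (repPrefix Q 0 S.length)

/-- Unit-cost Levenshtein distance (replaces Mathlib's removed `levenshtein Levenshtein.defaultCost`). -/
def levenshteinUnit [DecidableEq α] : List α → List α → ℕ
  | [], ys => ys.length
  | x :: xs, [] => xs.length + 1
  | x :: xs, y :: ys =>
      min (levenshteinUnit xs (y :: ys) + 1)
        (min (levenshteinUnit (x :: xs) ys + 1) (levenshteinUnit xs ys + if x = y then 0 else 1))

/-- Edit (Levenshtein) distance. -/
def editDist [DecidableEq α] (S T : List α) : ℕ :=
  levenshteinUnit S T

/-- A string is primitive if it is nonempty and not a proper power of a string. -/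
def Primitive (Q : List α) : Prop :=
  Q ≠ [] ∧ ∀ (U : List α) (t : ℕ), 2 ≤ t → Q ≠ (List.replicate t U).flatten

/-- p is a period of S. -/
def IsPeriod [Inhabited α] (p : ℕ) (S : List α) : Prop :=
  0 < p ∧ ∀ i, i + p < S.length → S.getD i default = S.getD (i + p) default

/-- per(S): the smallest period of S. -/
noncomputable def per [Inhabited α] (S : List α) : ℕ := sInf {p | IsPeriod p S}

/-- Occ^H_k(P,T): starting positions of k-mismatch occurrences of P in T. -/
def occH [DecidableEq α] [Inhabited α] (k : ℕ) (P T : List α) : Finset ℕ :=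
  (Finset.range (T.length - P.length + 1)).filter
    (fun i => hamming P (frag T i (i + P.length)) ≤ k)

/-- Exact occurrences of B in T. -/
def occExact [DecidableEq α] (B T : List α) : Finset ℕ :=
  (Finset.range (T.length + 1)).filter (fun i => frag T i (i + B.length) = B)

/-- Occ^E_k(P,T): starting positions of k-error (edit distance) occurrences of P in T. -/
def occE [DecidableEq α] (k : ℕ) (P T : List α) : Set ℕ :=
  {i | ∃ j, i ≤ j ∧ j ≤ T.length ∧ editDist P (frag T i j) ≤ k}

/-- δ_E^cyc(S,Q): minimum edit distance of S to any substring of Q^∞. -/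
noncomputable def edCyc [DecidableEq α] [Inhabited α] (S Q : List α) : ℕ :=
  sInf {d | ∃ i j, i ≤ j ∧ d = editDist S (repPrefix Q i j)}

/-- δ_E(S,Q*): minimum edit distance of S to a prefix of Q^∞. -/
noncomputable def edStar [DecidableEq α] [Inhabited α] (S Q : List α) : ℕ :=
  sInf {d | ∃ j, d = editDist S (repPrefix Q 0 j)}

/-- Minimum edit distance of T to a substring of Q^∞ starting at position x. -/
noncomputable def edStarAt [DecidableEq α] [Inhabited α] (T Q : List α) (x : ℕ) : ℕ :=
  sInf {d | ∃ j, x ≤ j ∧ d = editDist T (repPrefix Q x j)}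

/-- Minimum edit distance of T to a substring of Q^∞ ending at a position ≡ y (mod |Q|). -/
noncomputable def edEndAt [DecidableEq α] [Inhabited α] (T Q : List α) (y : ℕ) : ℕ :=
  sInf {d | ∃ i j, i ≤ j ∧ j % Q.length = y % Q.length ∧ d = editDist T (repPrefix Q i j)}

/-- Minimum edit distance of L to a substring of Q^∞ ending at a multiple of |Q|. -/
noncomputable def edEndMul [DecidableEq α] [Inhabited α] (L Q : List α) : ℕ :=
  sInf {d | ∃ i j, i ≤ j * Q.length ∧ d = editDist L (repPrefix Q i (j * Q.length))}

/-- The fragment S[i..j) of S is locked with respect to Q. -/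
def Locked [DecidableEq α] [Inhabited α] (S Q : List α) (i j : ℕ) : Prop :=
  (∃ a : ℕ, edCyc (frag S i j) Q = editDist (frag S i j) (repPrefix Q 0 (a * Q.length))) ∨
  (j = S.length ∧ edCyc (frag S i j) Q = edStar (frag S i j) Q) ∨
  (i = 0 ∧ edCyc (frag S i j) Q = edEndMul (frag S i j) Q) ∨
  (i = 0 ∧ j = S.length)

/-- rot^j(Q): rotation moving the last j (mod |Q|) characters to the front. -/
def rotR (Q : List α) (j : ℕ) : List α := Q.rotate (Q.length - j % Q.length)

/-- |Mis(T,Q*) ∩ [a,b)|. -/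
def misCount [DecidableEq α] [Inhabited α] (T Q : List α) (a b : ℕ) : ℕ :=
  ((Finset.Ico a b).filter (fun i => i < T.length ∧
     T.getD i default ≠ Q.getD (i % Q.length) default)).card

/-- μ_j: the total weight of aligned mismatch pairs of P and T against Q^∞ at shift j·|Q|:
a pair (τ = j|Q|+π, π) with π ∈ Mis(P,Q*), τ ∈ Mis(T,Q*) has weight 2 − δ_H(P[π],T[τ]). -/
def mu [DecidableEq α] [Inhabited α] (P T Q : List α) (j : ℕ) : ℕ :=
  ∑ π ∈ Finset.range P.length,
    if P.getD π default ≠ Q.getD (π % Q.length) default ∧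
       j * Q.length + π < T.length ∧
       T.getD (j * Q.length + π) default ≠ Q.getD ((j * Q.length + π) % Q.length) default
    then (if P.getD π default = T.getD (j * Q.length + π) default then 2 else 1)
    else 0

section Lemmas
variable [Inhabited α]

lemma isPeriod_big (S : List α) : IsPeriod (S.length + 1) S :=
  ⟨Nat.succ_pos _, fun i h => absurd h (by omega)⟩

lemma per_isPeriod (S : List α) : IsPeriod (per S) S := by
  have h : {p | IsPeriod p S}.Nonempty := ⟨S.length + 1, isPeriod_big S⟩
  exact Nat.sInf_mem h

lemma per_pos (S : List α) : 0 < per S := (per_isPeriod S).1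

lemma per_le {S : List α} {p : ℕ} (h : IsPeriod p S) : per S ≤ p := Nat.sInf_le h

lemma frag_length {S : List α} {a b : ℕ} (hab : a ≤ b) (hb : b ≤ S.length) :
    (frag S a b).length = b - a := by
  simp [frag]; omega

lemma frag_getD {S : List α} {a b i : ℕ} (hi : i < b - a) (h2 : a + i < S.length) :
    (frag S a b).getD i default = S.getD (a + i) default := by
  rw [List.getD_eq_getElem?_getD, List.getD_eq_getElem?_getD, frag,
    List.getElem?_take, if_pos hi, List.getElem?_drop]

lemma repPrefix_length (Q : List α) (n : ℕ) : (repPrefix Q 0 n).length = n := by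
  simp [repPrefix]

lemma repPrefix_getD {Q : List α} {n i : ℕ} (hi : i < n) :
    (repPrefix Q 0 n).getD i default = Q.getD (i % Q.length) default := by
  rw [List.getD_eq_getElem?_getD, repPrefix]
  rw [List.getElem?_eq_getElem (by simpa using hi)]
  simp

lemma getD_periodic {S : List α} {q : ℕ} (h : IsPeriod q S) :
    ∀ i, i < S.length → S.getD i default = S.getD (i % q) default := by
  intro i
  induction i using Nat.strong_induction_on with
  | _ i ih =>
    intro hi
    rcases lt_or_ge i q with h'|h'
    · rw [Nat.mod_eq_of_lt h']
    · have hq := h.1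
      have h1 : (i - q) + q < S.length := by omega
      have := (h.2 (i - q) h1).symm
      rw [show (i - q) + q = i by omega] at this
      rw [this, ih (i - q) (by omega) (by omega)]
      congr 1
      conv_rhs => rw [show i = (i - q) + q by omega]
      rw [Nat.add_mod_right] 

lemma flatten_replicate_length (U : List α) (t : ℕ) :
    ((List.replicate t U).flatten).length = t * U.length := by
  induction t with
  | zero => simp
  | succ n ih => simp [List.replicate_succ, ih]; ring

lemma flatten_replicate_getD {U : List α} {t r : ℕ} (h : r < t * U.length) :
    ((List.replicate t U).flatten).getD r default = U.getD (r % U.length) default := by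
  induction t generalizing r with
  | zero => simp at h
  | succ n ih =>
    rw [List.replicate_succ, List.flatten_cons]
    rw [Nat.succ_mul] at h
    have hh : r < U.length + n * U.length := by omega
    rcases lt_or_ge r U.length with h'|h'
    · rw [List.getD_eq_getElem?_getD, List.getElem?_append, if_pos h',
        Nat.mod_eq_of_lt h', ← List.getD_eq_getElem?_getD]
    · have hu : 0 < U.length := by
        rcases Nat.eq_zero_or_pos U.length with h0|hu
        · rw [h0, Nat.mul_zero] at hh; omega
        · exact hu
      have h2 : r - U.length < n * U.length := by omega
      rw [List.getD_eq_getElem?_getD, List.getElem?_append_right h',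
        ← List.getD_eq_getElem?_getD, ih h2]
      congr 1
      conv_rhs => rw [show r = (r - U.length) + U.length by omega]
      rw [Nat.add_mod_right]

lemma getD_take {S : List α} {n i : ℕ} (hi : i < n) :
    (S.take n).getD i default = S.getD i default := by
  rw [List.getD_eq_getElem?_getD, List.getD_eq_getElem?_getD, List.getElem?_take, if_pos hi]

lemma primitive_take_per {S : List α} (h : per S ≤ S.length) :
    Primitive (S.take (per S)) := by
  set q := per S with hqdef
  have hq : 0 < q := per_pos S
  have hlen : (S.take q).length = q := by rw [List.length_take]; omega
  constructor
  · intro hnil; rw [hnil] at hlen; simp at hlen; omega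
  · intro U t ht hcon
    have hqu : q = t * U.length := by rw [← hlen, hcon, flatten_replicate_length]
    have hU : 0 < U.length := by
      rcases Nat.eq_zero_or_pos U.length with h0|h1
      · rw [h0, Nat.mul_zero] at hqu; omega
      · exact h1
    have hult : U.length < q := by
      have : 2 * U.length ≤ t * U.length := Nat.mul_le_mul_right _ ht
      omega
    have hdvd : U.length ∣ q := ⟨t, by rw [hqu, Nat.mul_comm]⟩
    have hperq : IsPeriod q S := per_isPeriod S
    -- u is a period of S
    have hkey : ∀ i, i < S.length → S.getD i default = U.getD (i % U.length) default := by
      intro i hi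
      rw [getD_periodic hperq i hi, ← getD_take (Nat.mod_lt i hq), hcon,
        flatten_replicate_getD (by rw [← hqu]; exact Nat.mod_lt i hq),
        Nat.mod_mod_of_dvd i hdvd]
    have hup : IsPeriod U.length S := by
      refine ⟨hU, fun i hiu => ?_⟩
      rw [hkey i (by omega), hkey (i + U.length) (by omega), Nat.add_mod_right]
    have := per_le hup
    omega

lemma rot_helper (U : List α) (r : ℕ) :
    ∀ n, U.drop r ++ (List.replicate n U).flatten ++ U.take r
      = (List.replicate (n+1) (U.drop r ++ U.take r)).flatten := by
  intro n
  induction n with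
  | zero => simp
  | succ m ih =>
    rw [List.replicate_succ, List.flatten_cons, show m + 1 + 1 = (m + 1) + 1 from rfl,
      List.replicate_succ (a := U.drop r ++ U.take r), List.flatten_cons, ← ih]
    have hx : ∀ X : List α, U ++ X = U.take r ++ (U.drop r ++ X) := by
      intro X; rw [← List.append_assoc, List.take_append_drop]
    simp only [List.append_assoc]
    congr 1
    exact hx _

lemma flatten_replicate_rotate {U : List α} {t r : ℕ} (ht : 1 ≤ t) (hr : r ≤ U.length) :
    ((List.replicate t U).flatten).rotate r = (List.replicate t (U.rotate r)).flatten := by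
  obtain ⟨n, rfl⟩ : ∃ n, t = n + 1 := ⟨t - 1, by omega⟩
  have hrle : r ≤ ((List.replicate (n+1) U).flatten).length := by
    rw [flatten_replicate_length, Nat.succ_mul]; omega
  rw [List.rotate_eq_drop_append_take hrle, List.replicate_succ, List.flatten_cons,
    List.drop_append_of_le_length hr, List.take_append_of_le_length hr,
    List.append_assoc, ← List.append_assoc, rot_helper]
  congr 2
  exact (List.rotate_eq_drop_append_take hr).symm

lemma flatten_replicate_rotate_mod {U : List α} {t : ℕ} (ht : 1 ≤ t) (hU : 0 < U.length) :
    ∀ s, ((List.replicate t U).flatten).rotate s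
      = (List.replicate t (U.rotate (s % U.length))).flatten := by
  have hfix : ((List.replicate t U).flatten).rotate U.length = (List.replicate t U).flatten := by
    rw [flatten_replicate_rotate ht (le_refl _), List.rotate_length]
  have key : ∀ c b, b ≤ U.length → ((List.replicate t U).flatten).rotate (U.length * c + b)
      = (List.replicate t (U.rotate b)).flatten := by
    intro c
    induction c with
    | zero =>
      intro b hb
      simp only [Nat.mul_zero, Nat.zero_add]
      exact flatten_replicate_rotate ht hb
    | succ d ih =>
      intro b hb
      have : U.length * (d + 1) + b = U.length + (U.length * d + b) := by ring
      rw [this, ← List.rotate_rotate, hfix, ih b hb]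
  intro s
  conv_lhs => rw [show s = U.length * (s / U.length) + s % U.length
    from (Nat.div_add_mod s U.length).symm]
  exact key _ _ (le_of_lt (Nat.mod_lt s hU))

lemma primitive_rotate {Q : List α} (h : Primitive Q) (n : ℕ) : Primitive (Q.rotate n) := by
  have hq : 0 < Q.length := List.length_pos_iff.mpr h.1
  constructor
  · intro hnil
    have := congrArg List.length hnil
    simp at this
    exact h.1 this
  · intro U t ht hcon
    have hlen : Q.length = t * U.length := by
      have := congrArg List.length hcon
      rwa [List.length_rotate, flatten_replicate_length] at this
    have hU : 0 < U.length := by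
      rcases Nat.eq_zero_or_pos U.length with h0|h1
      · rw [h0, Nat.mul_zero] at hlen; omega
      · exact h1
    have hQ2 : Q = ((List.replicate t U).flatten).rotate (Q.length - n % Q.length) := by
      rw [← hcon, List.rotate_rotate]
      have : n + (Q.length - n % Q.length) = Q.length * (n / Q.length + 1) := by
        have h1 := Nat.div_add_mod n Q.length
        have h2 := Nat.mod_lt n hq
        ring_nf
        omega
      rw [this, List.rotate_length_mul]
    rw [flatten_replicate_rotate_mod (by omega) hU] at hQ2
    exact h.2 _ t ht hQ2

lemma rotate_getD {Q : List α} (hQ : Q ≠ []) {c r : ℕ} (hr : r < Q.length) :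
    (Q.rotate c).getD r default = Q.getD ((r + c) % Q.length) default := by
  have h1 : r < (Q.rotate c).length := by rwa [List.length_rotate]
  have h2 : (r + c) % Q.length < Q.length := Nat.mod_lt _ (List.length_pos_iff.mpr hQ)
  rw [List.getD_eq_getElem?_getD, List.getD_eq_getElem?_getD,
    List.getElem?_eq_getElem h1, List.getElem?_eq_getElem h2]
  simp [List.getElem_rotate]

end Lemmas

section Counting
variable [Inhabited α] [DecidableEq α]

lemma hammingStar_frag {P Q : List α} {a b : ℕ} (hab : a ≤ b) (hb : b ≤ P.length)
    (hQ : Q ≠ []) :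
    hammingStar (frag P a b) Q
      = ((Finset.Ico a b).filter
          (fun t => P.getD t default ≠ Q.getD ((t - a) % Q.length) default)).card := by
  unfold hammingStar hamming
  rw [frag_length hab hb]
  have hcong : (Finset.range (b - a)).filter
        (fun i => (frag P a b).getD i default
          ≠ (repPrefix Q 0 (b - a)).getD i default)
      = (Finset.range (b - a)).filter
        (fun i => P.getD (a + i) default ≠ Q.getD (i % Q.length) default) := by
    apply Finset.filter_congr
    intro i hi
    rw [Finset.mem_range] at hi
    rw [frag_getD hi (by omega), repPrefix_getD hi]
  rw [hcong]
  apply Finset.card_bij (fun i _ => a + i)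
  · intro i hi
    rw [Finset.mem_filter, Finset.mem_range] at hi
    rw [Finset.mem_filter, Finset.mem_Ico]
    refine ⟨⟨by omega, by omega⟩, ?_⟩
    rw [show a + i - a = i by omega]
    exact hi.2
  · intro i hi j hj hij
    omega
  · intro t ht
    rw [Finset.mem_filter, Finset.mem_Ico] at ht
    refine ⟨t - a, ?_, by omega⟩
    rw [Finset.mem_filter, Finset.mem_range, show a + (t - a) = t by omega]
    exact ⟨by omega, ht.2⟩

end Counting

section Ceil

def ceilN (a b : ℕ) : ℕ := (a + b - 1) / b

lemma ceilN_zero (b : ℕ) : ceilN 0 b = 0 := by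
  unfold ceilN
  rcases Nat.eq_zero_or_pos b with h|h
  · simp [h]
  · rw [Nat.zero_add]
    exact Nat.div_eq_of_lt (by omega)

lemma ceilN_one {a b : ℕ} (ha : 1 ≤ a) (hab : a ≤ b) : ceilN a b = 1 := by
  unfold ceilN
  have hb : 0 < b := by omega
  have h2 : a + b - 1 = b + (a - 1) := by omega
  rw [h2, Nat.add_div_left _ hb, Nat.div_eq_of_lt (by omega)]

lemma ceilN_mono {a a' : ℕ} (b : ℕ) (h : a ≤ a') : ceilN a b ≤ ceilN a' b :=
  Nat.div_le_div_right (by omega)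

lemma ceilN_add_le {a c b : ℕ} (hb : 0 < b) (hc : c ≤ b) :
    ceilN (a + c) b ≤ ceilN a b + 1 := by
  unfold ceilN
  have h1 : a + c + b - 1 ≤ (a + b - 1) + b := by omega
  calc (a + c + b - 1) / b ≤ ((a + b - 1) + b) / b := Nat.div_le_div_right h1
    _ = (a + b - 1) / b + 1 := Nat.add_div_right _ hb

lemma ceilN_mul (c b : ℕ) (hb : 0 < b) : ceilN (c * b) b = c := by
  unfold ceilN
  have h1 : c * b + b - 1 = b * c + (b - 1) := by
    rw [Nat.mul_comm]; omega
  rw [h1, Nat.mul_add_div hb, Nat.div_eq_of_lt (by omega), Nat.add_zero]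

lemma ceilN_le_mul {a b : ℕ} (hb : 0 < b) : a ≤ ceilN a b * b := by
  unfold ceilN
  rw [Nat.mul_comm]
  have h2 := Nat.div_add_mod (a + b - 1) b
  have h3 : (a + b - 1) % b < b := Nat.mod_lt _ hb
  omega

lemma mul_lt_ceilN {a b : ℕ} (hb : 0 < b) : ceilN a b * b < a + b := by
  unfold ceilN
  have := Nat.div_mul_le_self (a + b - 1) b
  omega

lemma ceilN_cast {a b : ℕ} (hb : 0 < b) : (⌈(a : ℚ) / (b : ℚ)⌉ : ℤ) = (ceilN a b : ℤ) := by
  have hbq : (0 : ℚ) < (b : ℚ) := by exact_mod_cast hb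
  rw [Int.ceil_eq_iff]
  constructor
  · rw [lt_div_iff₀ hbq]
    have h2 : (ceilN a b : ℤ) * (b : ℤ) < (a : ℤ) + b := by exact_mod_cast mul_lt_ceilN (a := a) hb
    have hz : ((ceilN a b : ℤ) - 1) * (b : ℤ) < (a : ℤ) := by
      have : ((ceilN a b : ℤ) - 1) * (b : ℤ) = (ceilN a b : ℤ) * b - b := by ring
      omega
    exact_mod_cast hz
  · rw [div_le_iff₀ hbq]
    exact_mod_cast ceilN_le_mul (a := a) hb

end Ceil

section Mis
variable [DecidableEq α] [Inhabited α]

def mis (P Q : List α) (φ a b : ℕ) : ℕ :=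
  ((Finset.Ico a b).filter
    (fun t => P.getD t default ≠ Q.getD ((t + φ) % Q.length) default)).card

lemma mis_left (P Q : List α) (φ a b : ℕ) (hab : a < b) :
    mis P Q φ a b ≤ mis P Q φ (a+1) b + 1 ∧ mis P Q φ (a+1) b ≤ mis P Q φ a b := by
  unfold mis
  rw [← Finset.insert_Ico_add_one_left_eq_Ico hab, Finset.filter_insert]
  split
  · rw [Finset.card_insert_of_notMem (by simp)]
    omega
  · omega

lemma mis_right (P Q : List α) (φ a b : ℕ) (hab : a ≤ b) :
    mis P Q φ a (b+1) ≤ mis P Q φ a b + 1 ∧ mis P Q φ a b ≤ mis P Q φ a (b+1) := by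
  unfold mis
  rw [Nat.Ico_succ_right_eq_insert_Ico hab, Finset.filter_insert]
  split
  · rw [Finset.card_insert_of_notMem (by simp)]
    omega
  · omega

lemma hammingStar_rot_mis {P Q : List α} {φ a b : ℕ} (hab : a ≤ b) (hb : b ≤ P.length)
    (hQ : Q ≠ []) :
    hammingStar (frag P a b) (Q.rotate ((φ + a) % Q.length)) = mis P Q φ a b := by
  have hQlen : 0 < Q.length := List.length_pos_iff.mpr hQ
  have hQ' : Q.rotate ((φ + a) % Q.length) ≠ [] := by
    intro h
    have := congrArg List.length h
    simp at this
    exact hQ this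
  rw [hammingStar_frag hab hb hQ']
  unfold mis
  congr 1
  apply Finset.filter_congr
  intro t ht
  rw [Finset.mem_Ico] at ht
  have hr : (t - a) % Q.length < Q.length := Nat.mod_lt _ hQlen
  rw [List.length_rotate, rotate_getD hQ hr, ← Nat.add_mod, show t - a + (φ + a) = t + φ by omega]

end Mis

section Main
variable [DecidableEq α] [Inhabited α]

abbrev GoalP (P : List α) (m k : ℕ) : Prop :=
    (∃ b : Fin (2 * k) → ℕ,
        (∀ i, b i + m / (8 * k) ≤ m) ∧
        (∀ i j, i ≠ j → b i + m / (8 * k) ≤ b j ∨ b j + m / (8 * k) ≤ b i) ∧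
        (∀ i, m < 128 * k * per (frag P (b i) (b i + m / (8 * k))))) ∨
    (∃ (r : ℕ) (s len : Fin r → ℕ) (Qf : Fin r → List α),
        (∀ i, s i + len i ≤ m) ∧
        (∀ i j, i ≠ j → s i + len i ≤ s j ∨ s j + len j ≤ s i) ∧
        3 * m ≤ 8 * ∑ i, len i ∧
        (∀ i, m ≤ 8 * k * len i) ∧
        (∀ i, Primitive (Qf i)) ∧
        (∀ i, 128 * k * (Qf i).length ≤ m) ∧
        (∀ i, (hammingStar (frag P (s i) (s i + len i)) (Qf i) : ℤ)
            = ⌈(8 * k * len i : ℚ) / (m : ℚ)⌉)) ∨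
    (∃ Q : List α, Primitive Q ∧ 128 * k * Q.length ≤ m ∧ hammingStar P Q < 8 * k)

lemma outA (P : List α) (m k L j : ℕ) (hL : L = m / (8*k)) (hjm : j ≤ m)
    {β : ℕ} (hβ : β = 2*k) (bks : Fin β → ℕ)
    (h1 : ∀ i, bks i + L ≤ j)
    (h2 : ∀ i i', i ≠ i' → bks i + L ≤ bks i' ∨ bks i' + L ≤ bks i)
    (h3 : ∀ i, m < 128 * k * per (frag P (bks i) (bks i + L))) :
    GoalP P m k := by
  subst hβ
  unfold GoalP
  rw [show m / (8*k) = L from hL.symm]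
  exact Or.inl ⟨bks, fun i => le_trans (h1 i) hjm, h2, h3⟩

lemma outB (P : List α) (m k j : ℕ) (hjm : j ≤ m)
    {r : ℕ} (s len : Fin r → ℕ) (Qf : Fin r → List α)
    (h1 : ∀ i, s i + len i ≤ j)
    (h2 : ∀ i i', i ≠ i' → s i + len i ≤ s i' ∨ s i' + len i' ≤ s i)
    (h3 : 3 * m ≤ 8 * ∑ i, len i)
    (h4 : ∀ i, m ≤ 8 * k * len i)
    (h5 : ∀ i, Primitive (Qf i))
    (h6 : ∀ i, 128 * k * (Qf i).length ≤ m)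
    (h7 : ∀ i, (hammingStar (frag P (s i) (s i + len i)) (Qf i) : ℤ)
        = ⌈(8 * k * len i : ℚ) / (m : ℚ)⌉) :
    GoalP P m k :=
  Or.inr (Or.inl ⟨r, s, len, Qf, fun i => le_trans (h1 i) hjm, h2, h3, h4, h5, h6, h7⟩)

lemma main_rec (P : List α) (m k L : ℕ) (hP : P.length = m) (hk1 : 1 ≤ k)
    (h128 : 128 * k ≤ m) (hL : L = m / (8*k)) :
    ∀ (N j β r : ℕ) (bks : Fin β → ℕ) (s len : Fin r → ℕ) (Qf : Fin r → List α),
      m - j ≤ N → β ≤ 2 * k → j ≤ m →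
      (∀ i, bks i + L ≤ j) →
      (∀ i i', i ≠ i' → bks i + L ≤ bks i' ∨ bks i' + L ≤ bks i) →
      (∀ i, m < 128 * k * per (frag P (bks i) (bks i + L))) →
      (∀ i, s i + len i ≤ j) →
      (∀ i i', i ≠ i' → s i + len i ≤ s i' ∨ s i' + len i' ≤ s i) →
      (∀ i, m ≤ 8 * k * len i) →
      (∀ i, Primitive (Qf i)) →
      (∀ i, 128 * k * (Qf i).length ≤ m) →
      (∀ i, (hammingStar (frag P (s i) (s i + len i)) (Qf i) : ℤ)
          = ⌈(8 * k * len i : ℚ) / (m : ℚ)⌉) →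
      j ≤ β * L + ∑ i, len i →
      GoalP P m k := by
  have hk8 : 0 < 8 * k := by omega
  have hm0 : 0 < m := by omega
  have hL1 : 1 ≤ L := by
    rw [hL]
    exact (Nat.one_le_div_iff hk8).mpr (by omega)
  have hLm : 8 * k * L ≤ m := by
    have h := Nat.div_mul_le_self m (8*k)
    calc 8 * k * L = (m / (8*k)) * (8*k) := by rw [hL]; ring
      _ ≤ m := h
  intro N
  induction N with
  | zero =>
    intro j β r bks s len Qf hN hβ hjm hb1 hb2 hb3 hr1 hr2 hr3 hr4 hr5 hr6 hsum
    rcases eq_or_lt_of_le hβ with hβeq | hβlt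
    · exact outA P m k L j hL hjm hβeq bks hb1 hb2 hb3
    · by_cases hρ : 3 * m ≤ 8 * ∑ i, len i
      · exact outB P m k j hjm s len Qf hr1 hr2 hρ hr3 hr4 hr5 hr6
      · -- contradiction: j = m but j + L ≤ m impossible
        exfalso
        have hje : j = m := by omega
        have hbL : β * L ≤ (2*k - 1) * L := Nat.mul_le_mul_right L (by omega)
        have h2kL : (2*k - 1) * L + L = 2 * k * L := by
          have e1 : (2*k - 1) + 1 = 2*k := by omega
          calc (2*k-1)*L + L = ((2*k-1) + 1) * L := by ring
            _ = 2*k*L := by rw [e1]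
        have h16 : 8 * (2 * k * L) = 2 * (8 * k * L) := by ring
        omega
  | succ N ih =>
    intro j β r bks s len Qf hN hβ hjm hb1 hb2 hb3 hr1 hr2 hr3 hr4 hr5 hr6 hsum
    rcases eq_or_lt_of_le hβ with hβeq | hβlt
    · exact outA P m k L j hL hjm hβeq bks hb1 hb2 hb3
    · by_cases hρ : 3 * m ≤ 8 * ∑ i, len i
      · exact outB P m k j hjm s len Qf hr1 hr2 hρ hr3 hr4 hr5 hr6
      · push_neg at hρ
        -- counting facts
        have hbL : β * L ≤ (2*k - 1) * L := Nat.mul_le_mul_right L (by omega)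
        have h2kL : (2*k - 1) * L + L = 2 * k * L := by
          have e1 : (2*k - 1) + 1 = 2*k := by omega
          calc (2*k-1)*L + L = ((2*k-1) + 1) * L := by ring
            _ = 2*k*L := by rw [e1]
        have h16 : 8 * (2 * k * L) = 2 * (8 * k * L) := by ring
        have hcount : 8 * (j + L) + 3 * m ≤ 8 * m := by omega
        have hjLm : j + L ≤ m := by omega
        -- window facts
        have hWlen : (frag P j (j + L)).length = L := by
          have h := frag_length (S := P) (a := j) (b := j + L) (by omega) (by rw [hP]; omega)
          rwa [show j + L - j = L by omega] at h
        obtain ⟨q, hqdef⟩ : ∃ q, per (frag P j (j + L)) = q := ⟨_, rfl⟩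
        have hqp : 0 < q := hqdef ▸ per_pos _
        by_cases hbrk : m < 128 * k * q
        · -- break case
          have hbeta : (β + 1) * L = β * L + L := by ring
          refine ih (j + L) (β + 1) r (Fin.snoc bks j) s len Qf (by omega) (by omega)
            hjLm ?_ ?_ ?_ (fun i => by have := hr1 i; omega) hr2 hr3 hr4 hr5 hr6 (by omega)
          · intro i
            induction i using Fin.lastCases with
            | last => simp only [Fin.snoc_last]; omega
            | cast i => simp only [Fin.snoc_castSucc]; have := hb1 i; omega
          · intro i i' hne
            induction i using Fin.lastCases with
            | last =>
              induction i' using Fin.lastCases with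
              | last => exact absurd rfl hne
              | cast i' =>
                right; simp only [Fin.snoc_castSucc, Fin.snoc_last]; have := hb1 i'; omega
            | cast i =>
              induction i' using Fin.lastCases with
              | last =>
                left; simp only [Fin.snoc_castSucc, Fin.snoc_last]; have := hb1 i; omega
              | cast i' =>
                simp only [Fin.snoc_castSucc]
                exact hb2 i i' (fun h => hne (by rw [h]))
          · intro i
            induction i using Fin.lastCases with
            | last => simp only [Fin.snoc_last]; rw [hqdef]; exact hbrk
            | cast i => simp only [Fin.snoc_castSucc]; exact hb3 i
        · push_neg at hbrk
          have hqL : q ≤ L := by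
            rw [hL, Nat.le_div_iff_mul_le hk8]
            have h1 : q * (8*k) = 8*k*q := by ring
            have h2 : 8*k*q ≤ 128*k*q := Nat.mul_le_mul_right q (by omega)
            omega
          obtain ⟨Q, hQdef⟩ : ∃ Q', frag P j (j + q) = Q' := ⟨_, rfl⟩
          have hQlen : Q.length = q := by
            rw [← hQdef]
            have h := frag_length (S := P) (a := j) (b := j + q) (by omega) (by rw [hP]; omega)
            rwa [show j + q - j = q by omega] at h
          have hQne : Q ≠ [] := by
            intro h; rw [h] at hQlen; simp at hQlen; omega
          have hQprim : Primitive Q := by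
            have htk : (frag P j (j + L)).take q = Q := by
              rw [← hQdef, frag, frag, show j + L - j = L by omega,
                show j + q - j = q by omega, List.take_take, min_eq_left hqL]
            have hp := primitive_take_per (S := frag P j (j + L))
              (by rw [hWlen, hqdef]; exact hqL)
            rw [hqdef, htk] at hp
            exact hp
          have hφj : j ≤ q * m := le_trans hjm (Nat.le_mul_of_pos_left m hqp)
          have halign : ∀ t, j ≤ t → (t + (q*m - j)) % Q.length = (t - j) % q := by
            intro t ht
            rw [hQlen, show t + (q*m - j) = (t - j) + q * m by omega,
              Nat.add_mul_mod_self_left]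
          have hD0 : mis P Q (q*m - j) j (j + L) = 0 := by
            unfold mis
            rw [Finset.card_eq_zero, Finset.filter_eq_empty_iff]
            intro t ht
            rw [Finset.mem_Ico] at ht
            simp only [ne_eq, not_not]
            rw [halign t ht.1]
            have hmod : (t - j) % q < q := Nat.mod_lt _ hqp
            have h1 : (frag P j (j + L)).getD (t - j) default = P.getD t default := by
              rw [frag_getD (by omega) (by rw [hP]; omega), show j + (t - j) = t by omega]
            have h2 : (frag P j (j + L)).getD (t - j) default
                = (frag P j (j + L)).getD ((t - j) % q) default := by
              have := getD_periodic (per_isPeriod (frag P j (j + L))) (t - j)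
                (by rw [hWlen]; omega)
              rwa [hqdef] at this
            have h3 : (frag P j (j + L)).getD ((t - j) % q) default
                = P.getD (j + (t - j) % q) default :=
              frag_getD (by omega) (by rw [hP]; omega)
            have h4 : Q.getD ((t - j) % q) default = P.getD (j + (t - j) % q) default := by
              rw [← hQdef]
              exact frag_getD (by omega) (by rw [hP]; omega)
            rw [← h1, h2, h3, ← h4]
          by_cases hEne : {e | j + L + 1 ≤ e ∧ e ≤ m
              ∧ ceilN (8*k*(e - j)) m ≤ mis P Q (q*m - j) j e}.Nonempty
          · have heE := Nat.sInf_mem hEne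
            obtain ⟨e, hedef⟩ : ∃ e, sInf {e | j + L + 1 ≤ e ∧ e ≤ m
                ∧ ceilN (8*k*(e - j)) m ≤ mis P Q (q*m - j) j e} = e := ⟨_, rfl⟩
            rw [hedef] at heE
            simp only [Set.mem_setOf_eq] at heE
            obtain ⟨h1e, h2e, h3e⟩ := heE
            have hprev : mis P Q (q*m - j) j (e - 1) < ceilN (8*k*((e-1) - j)) m := by
              rcases eq_or_lt_of_le (show j + L ≤ e - 1 by omega) with heq | hlt
              · rw [show e - 1 = j + L from heq.symm, hD0, show j + L - j = L by omega]
                have hpos : 0 < 8*k*L := Nat.mul_pos (by omega) (by omega)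
                have := ceilN_one (show 1 ≤ 8*k*L by omega) hLm
                omega
              · have hne : e - 1 ∉ {e | j + L + 1 ≤ e ∧ e ≤ m
                    ∧ ceilN (8*k*(e - j)) m ≤ mis P Q (q*m - j) j e} :=
                  Nat.notMem_of_lt_sInf (by rw [hedef]; omega)
                simp only [Set.mem_setOf_eq] at hne
                by_contra hcon
                push_neg at hcon
                exact hne ⟨by omega, by omega, hcon⟩
            have hs1 : mis P Q (q*m - j) j e ≤ mis P Q (q*m - j) j (e - 1) + 1 := by
              have h := (mis_right P Q (q*m - j) j (e-1) (by omega)).1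
              rwa [show e - 1 + 1 = e by omega] at h
            have hceq : 8*k*(e - j) = 8*k*((e-1) - j) + 8*k := by
              rw [show e - j = ((e-1) - j) + 1 by omega]; ring
            have hcs : ceilN (8*k*(e - j)) m ≤ ceilN (8*k*((e-1) - j)) m + 1 := by
              rw [hceq]; exact ceilN_add_le hm0 (by omega)
            have hcm : ceilN (8*k*((e-1) - j)) m ≤ ceilN (8*k*(e - j)) m :=
              ceilN_mono m (Nat.mul_le_mul_left _ (by omega))
            have hkey : mis P Q (q*m - j) j e = ceilN (8*k*(e - j)) m := by omega
            have hrot0 : Q.rotate (((q*m - j) + j) % Q.length) = Q := by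
              rw [hQlen, show (q*m - j) + j = q * m by omega, Nat.mul_mod_right]
              exact List.rotate_zero Q
            have hham : (hammingStar (frag P j (j + (e - j))) Q : ℤ)
                = ⌈8 * (k : ℚ) * ((e - j : ℕ) : ℚ) / (m : ℚ)⌉ := by
              rw [show j + (e - j) = e by omega]
              have h1 : hammingStar (frag P j e) Q = mis P Q (q*m - j) j e := by
                conv_lhs => rw [← hrot0]
                exact hammingStar_rot_mis (by omega) (by rw [hP]; omega) hQne
              rw [h1, hkey, ← ceilN_cast hm0]
              congr 1
              rw [Nat.cast_mul, Nat.cast_mul, Nat.cast_ofNat]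
            refine ih e β (r + 1) bks (Fin.snoc s j) (Fin.snoc len (e - j)) (Fin.snoc Qf Q)
              (by omega) (by omega) h2e (fun i => by have := hb1 i; omega) hb2 hb3
              ?_ ?_ ?_ ?_ ?_ ?_ ?_
            · intro i
              induction i using Fin.lastCases with
              | last => simp only [Fin.snoc_last]; omega
              | cast i => simp only [Fin.snoc_castSucc]; have := hr1 i; omega
            · intro i i' hne
              induction i using Fin.lastCases with
              | last =>
                induction i' using Fin.lastCases with
                | last => exact absurd rfl hne
                | cast i' =>
                  right; simp only [Fin.snoc_castSucc, Fin.snoc_last]; have := hr1 i'; omega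
              | cast i =>
                induction i' using Fin.lastCases with
                | last =>
                  left; simp only [Fin.snoc_castSucc, Fin.snoc_last]; have := hr1 i; omega
                | cast i' =>
                  simp only [Fin.snoc_castSucc]
                  exact hr2 i i' (fun h => hne (by rw [h]))
            · intro i
              induction i using Fin.lastCases with
              | last =>
                simp only [Fin.snoc_last]
                have h8 : 8*k*(L+1) ≤ 8*k*(e - j) := Nat.mul_le_mul_left _ (by omega)
                have h9 : m < (L + 1) * (8*k) :=
                  (Nat.div_lt_iff_lt_mul hk8).mp (by rw [← hL]; omega)
                have h10 : (L+1)*(8*k) = 8*k*(L+1) := by ring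
                omega
              | cast i => simp only [Fin.snoc_castSucc]; exact hr3 i
            · intro i
              induction i using Fin.lastCases with
              | last => simp only [Fin.snoc_last]; exact hQprim
              | cast i => simp only [Fin.snoc_castSucc]; exact hr4 i
            · intro i
              induction i using Fin.lastCases with
              | last => simp only [Fin.snoc_last]; rw [hQlen]; exact hbrk
              | cast i => simp only [Fin.snoc_castSucc]; exact hr5 i
            · intro i
              induction i using Fin.lastCases with
              | last => simp only [Fin.snoc_last, Fin.snoc_castSucc]; exact hham
              | cast i => simp only [Fin.snoc_castSucc]; exact hr6 i
            · have hsum2 : (∑ i : Fin (r+1), (Fin.snoc len (e - j) : Fin (r+1) → ℕ) i)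
                  = (∑ i : Fin r, len i) + (e - j) := by
                rw [Fin.sum_univ_castSucc]; simp
              rw [hsum2]
              omega
          · have hjm2 : mis P Q (q*m - j) j m < ceilN (8*k*(m - j)) m := by
              rcases eq_or_lt_of_le hjLm with heq | hlt
              · rw [heq] at hD0
                rw [hD0, show m - j = L by omega]
                have hpos : 0 < 8*k*L := Nat.mul_pos (by omega) (by omega)
                have := ceilN_one (show 1 ≤ 8*k*L by omega) hLm
                omega
              · by_contra hcon
                push_neg at hcon
                exact hEne ⟨m, by omega, le_refl m, hcon⟩
            by_cases hE'ne : {d | d ≤ j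
                ∧ ceilN (8*k*(m - (j - d))) m ≤ mis P Q (q*m - j) (j - d) m}.Nonempty
            · have heE' := Nat.sInf_mem hE'ne
              obtain ⟨d, hddef⟩ : ∃ d, sInf {d | d ≤ j
                  ∧ ceilN (8*k*(m - (j - d))) m ≤ mis P Q (q*m - j) (j - d) m} = d := ⟨_, rfl⟩
              rw [hddef] at heE'
              simp only [Set.mem_setOf_eq] at heE'
              obtain ⟨hdj, hdge⟩ := heE'
              have hd0 : 0 < d := by
                rcases Nat.eq_zero_or_pos d with h0 | h1
                · exfalso
                  rw [h0] at hdge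
                  simp only [Nat.sub_zero] at hdge
                  omega
                · exact h1
              have hprev' : mis P Q (q*m - j) ((j - d) + 1) m
                  < ceilN (8*k*(m - ((j - d) + 1))) m := by
                have hne : (d - 1) ∉ {d | d ≤ j
                    ∧ ceilN (8*k*(m - (j - d))) m ≤ mis P Q (q*m - j) (j - d) m} :=
                  Nat.notMem_of_lt_sInf (by rw [hddef]; omega)
                simp only [Set.mem_setOf_eq] at hne
                push_neg at hne
                have h := hne (by omega)
                rwa [show j - (d - 1) = (j - d) + 1 by omega] at h
              have hs1' : mis P Q (q*m - j) (j - d) m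
                  ≤ mis P Q (q*m - j) ((j - d) + 1) m + 1 :=
                (mis_left P Q (q*m - j) (j - d) m (by omega)).1
              have hceq' : 8*k*(m - (j - d)) = 8*k*(m - ((j - d) + 1)) + 8*k := by
                rw [show m - (j - d) = (m - ((j - d) + 1)) + 1 by omega]; ring
              have hcs' : ceilN (8*k*(m - (j - d))) m
                  ≤ ceilN (8*k*(m - ((j - d) + 1))) m + 1 := by
                rw [hceq']; exact ceilN_add_le hm0 (by omega)
              have hcm' : ceilN (8*k*(m - ((j - d) + 1))) m
                  ≤ ceilN (8*k*(m - (j - d))) m :=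
                ceilN_mono m (Nat.mul_le_mul_left _ (by omega))
              have hkey' : mis P Q (q*m - j) (j - d) m = ceilN (8*k*(m - (j - d))) m := by
                omega
              refine outB P m k m (le_refl m) (r := 1) (fun _ => j - d)
                (fun _ => m - (j - d))
                (fun _ => Q.rotate (((q*m - j) + (j - d)) % Q.length))
                (fun i => by show j - d + (m - (j - d)) ≤ m; omega)
                (fun i i' hne => absurd (Subsingleton.elim i i') hne)
                ?_ ?_ (fun i => primitive_rotate hQprim _) ?_ ?_
              · show 3 * m ≤ 8 * ∑ _i : Fin 1, (m - (j - d))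
                rw [show (∑ _i : Fin 1, (m - (j - d))) = m - (j - d) by simp]
                omega
              · intro i
                show m ≤ 8 * k * (m - (j - d))
                have h8 : 8*(m - (j - d)) ≤ 8*k*(m - (j - d)) :=
                  Nat.mul_le_mul_right _ (by omega)
                omega
              · intro i
                show 128 * k * (Q.rotate (((q*m - j) + (j - d)) % Q.length)).length ≤ m
                rw [List.length_rotate, hQlen]
                exact hbrk
              · intro i
                show (hammingStar (frag P (j - d) ((j - d) + (m - (j - d))))
                    (Q.rotate (((q*m - j) + (j - d)) % Q.length)) : ℤ)
                  = ⌈8 * (k : ℚ) * ((m - (j - d) : ℕ) : ℚ) / (m : ℚ)⌉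
                rw [show (j - d) + (m - (j - d)) = m by omega]
                rw [hammingStar_rot_mis (by omega) (by rw [hP]) hQne, hkey',
                  ← ceilN_cast hm0]
                congr 1
                rw [Nat.cast_mul, Nat.cast_mul, Nat.cast_ofNat]
            · have hCm : ceilN (8*k*m) m = 8*k := ceilN_mul (8*k) m hm0
              have hd : mis P Q (q*m - j) 0 m < 8*k := by
                have hj' : j ∉ {d | d ≤ j
                    ∧ ceilN (8*k*(m - (j - d))) m ≤ mis P Q (q*m - j) (j - d) m} :=
                  fun h => hE'ne ⟨j, h⟩
                simp only [Set.mem_setOf_eq] at hj'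
                push_neg at hj'
                have h := hj' (le_refl j)
                rw [Nat.sub_self, Nat.sub_zero] at h
                omega
              refine Or.inr (Or.inr ⟨Q.rotate (((q*m - j) + 0) % Q.length),
                primitive_rotate hQprim _, ?_, ?_⟩)
              · rw [List.length_rotate, hQlen]
                exact hbrk
              · have hfrag : frag P 0 m = P := by
                  rw [frag, List.drop_zero, Nat.sub_zero, ← hP, List.take_length]
                have h := hammingStar_rot_mis (P := P) (Q := Q) (φ := q*m - j)
                  (a := 0) (b := m) (by omega) (by rw [hP]) hQne
                rw [hfrag] at h
                rw [h]
                exact hd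


theorem pattern_analysis' (P : List α) (m k : ℕ) (hP : P.length = m) (hk1 : 1 ≤ k)
    (hkm : k ≤ m) : GoalP P m k := by
  by_cases hsmall : m < 128 * k
  · refine Or.inl ⟨fun i => ↑i * (m / (8*k)), ?_, ?_, ?_⟩
    · intro i
      show ↑i * (m/(8*k)) + m/(8*k) ≤ m
      have hk8 : 0 < 8 * k := by omega
      have hLm : 8*k*(m/(8*k)) ≤ m := by
        have h := Nat.div_mul_le_self m (8*k)
        have h2 : 8*k*(m/(8*k)) = (m/(8*k)) * (8*k) := by ring
        omega
      have h1 : (↑i + 1) * (m/(8*k)) ≤ (2*k) * (m/(8*k)) :=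
        Nat.mul_le_mul_right _ (by have := i.isLt; omega)
      have h2 : ↑i * (m/(8*k)) + m/(8*k) = (↑i+1)*(m/(8*k)) := by ring
      have h3 : (2*k) * (m/(8*k)) ≤ 8*k*(m/(8*k)) := Nat.mul_le_mul_right _ (by omega)
      omega
    · intro i i' hne
      show ↑i * (m/(8*k)) + m/(8*k) ≤ ↑i' * (m/(8*k))
        ∨ ↑i' * (m/(8*k)) + m/(8*k) ≤ ↑i * (m/(8*k))
      rcases lt_or_gt_of_ne (fun h => hne (Fin.ext h)) with h | h
      · left
        have h1 := Nat.mul_le_mul_right (m/(8*k)) (show ↑i + 1 ≤ (↑i' : ℕ) by omega)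
        have h2 : ↑i * (m/(8*k)) + m/(8*k) = (↑i+1)*(m/(8*k)) := by ring
        omega
      · right
        have h1 := Nat.mul_le_mul_right (m/(8*k)) (show ↑i' + 1 ≤ (↑i : ℕ) by omega)
        have h2 : ↑i' * (m/(8*k)) + m/(8*k) = (↑i'+1)*(m/(8*k)) := by ring
        omega
    · intro i
      show m < 128 * k * per (frag P (↑i * (m / (8*k))) (↑i * (m / (8*k)) + m / (8*k)))
      have hp := per_pos (frag P (↑i * (m / (8*k))) (↑i * (m / (8*k)) + m / (8*k)))
      have h1 : 128*k*1 ≤ 128*k*per (frag P (↑i * (m / (8*k))) (↑i * (m / (8*k)) + m / (8*k))) :=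
        Nat.mul_le_mul_left _ hp
      omega
  · push_neg at hsmall
    exact main_rec P m k (m/(8*k)) hP hk1 hsmall rfl m 0 0 0 Fin.elim0 Fin.elim0 Fin.elim0
      Fin.elim0 (by omega) (by omega) (by omega) (fun i => i.elim0) (fun i => i.elim0)
      (fun i => i.elim0) (fun i => i.elim0) (fun i => i.elim0) (fun i => i.elim0)
      (fun i => i.elim0) (fun i => i.elim0) (fun i => i.elim0) (by simp)

end Main


/-- trichotomy — breaks, repetitive regions, or an approximate period. -/
theorem pattern_analysis {α : Type*} [DecidableEq α] [Inhabited α]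
    (P : List α) (m k : ℕ) (hP : P.length = m) (hk1 : 1 ≤ k) (hkm : k ≤ m) :
    (∃ b : Fin (2 * k) → ℕ,
        (∀ i, b i + m / (8 * k) ≤ m) ∧
        (∀ i j, i ≠ j → b i + m / (8 * k) ≤ b j ∨ b j + m / (8 * k) ≤ b i) ∧
        (∀ i, m < 128 * k * per (frag P (b i) (b i + m / (8 * k))))) ∨
    (∃ (r : ℕ) (s len : Fin r → ℕ) (Qf : Fin r → List α),
        (∀ i, s i + len i ≤ m) ∧
        (∀ i j, i ≠ j → s i + len i ≤ s j ∨ s j + len j ≤ s i) ∧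
        3 * m ≤ 8 * ∑ i, len i ∧
        (∀ i, m ≤ 8 * k * len i) ∧
        (∀ i, Primitive (Qf i)) ∧
        (∀ i, 128 * k * (Qf i).length ≤ m) ∧
        (∀ i, (hammingStar (frag P (s i) (s i + len i)) (Qf i) : ℤ)
            = ⌈(8 * k * len i : ℚ) / (m : ℚ)⌉)) ∨
    (∃ Q : List α, Primitive Q ∧ 128 * k * Q.length ≤ m ∧ hammingStar P Q < 8 * k) :=
  pattern_analysis' P m k hP hk1 hkm
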